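/- Let S̄ be an even subset of Ω of size v − s ≥ 1 containing a distinguished element g* (the 'partial' generator). Define σ̄_{odd,u} = (i^{u·g*} + i^{3 − u·g*})/(1 − i) + Σ_{g ∈ S̄, g ≠ g*} (i^{u·g} + i^{−u·g}) and F_{odd,3} = 3·2^n Σ_{u ∈ Δ_0} σ̄_{odd,u}² + Σ_{u ∈ (Z_4)^n} σ̄_{odd,u}³. Then Σ_{u ∈ Δ_0} σ̄_{odd,u}² = 2^n (2(v−s) − 1)², Σ_{u ∈ (Z_4)^n} σ̄_{odd,u}³ = 0, and hence F_{odd,3} = 3·2^{2n}(2(v−s) − 1)². -/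

import Mathlib

open Complex Finset

noncomputable def ipow (a : ZMod 4) : ℂ := Complex.I ^ a.val

def isOddZ4 (a : ZMod 4) : Prop := a = 1 ∨ a = 3

instance : DecidablePred isOddZ4 := fun a => by unfold isOddZ4; infer_instance

/-- `g` has an odd entry and its first (lowest-index) odd entry equals 1. -/
def inOmega {n : ℕ} (g : Fin n → ZMod 4) : Prop :=
  ∃ i : Fin n, g i = 1 ∧ ∀ j : Fin n, j < i → ¬ isOddZ4 (g j)

instance {n : ℕ} : DecidablePred (inOmega (n := n)) := fun g => by
  unfold inOmega; infer_instance

def allEven {n : ℕ} (u : Fin n → ZMod 4) : Prop := ∀ i, u i = 0 ∨ u i = 2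

instance {n : ℕ} : DecidablePred (allEven (n := n)) := fun u => by
  unfold allEven; infer_instance

def dot4 {n : ℕ} (u w : Fin n → ZMod 4) : ZMod 4 := ∑ i, u i * w i

/-- σ̄_{odd,u} of (A.14): the distinguished (partial) generator g* contributes
(i^{u·g*} + i^{3-u·g*})/(1-i), the remaining elements of S̄ contribute
i^{u·g} + i^{-u·g}. -/
noncomputable def sigOdd {n : ℕ} (Sb : Finset (Fin n → ZMod 4))
    (gstar : Fin n → ZMod 4) (u : Fin n → ZMod 4) : ℂ :=
  (ipow (dot4 u gstar) + ipow (3 - dot4 u gstar)) / (1 - Complex.I)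
    + ∑ g ∈ Sb.erase gstar, (ipow (dot4 u g) + ipow (-(dot4 u g)))

/- ===== auxiliary lemmas ===== -/

lemma I_pow_mod' (m : ℕ) : Complex.I ^ (m % 4) = Complex.I ^ m := by
  conv_rhs => rw [← Nat.div_add_mod m 4]
  rw [pow_add, pow_mul, Complex.I_pow_four, one_pow, one_mul]

lemma ipow_add' (a b : ZMod 4) : ipow (a + b) = ipow a * ipow b := by
  unfold ipow; rw [ZMod.val_add, I_pow_mod', pow_add]

lemma ipow_zero' : ipow 0 = 1 := by simp [ipow]
lemma ipow_one' : ipow 1 = Complex.I := by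
  show Complex.I ^ (1 : ZMod 4).val = Complex.I
  rw [show (1 : ZMod 4).val = 1 from rfl, pow_one]
lemma ipow_two' : ipow 2 = -1 := by
  show Complex.I ^ (2 : ZMod 4).val = -1
  rw [show (2 : ZMod 4).val = 2 from rfl]; exact Complex.I_sq
lemma ipow_three' : ipow 3 = -Complex.I := by
  show Complex.I ^ (3 : ZMod 4).val = -Complex.I
  rw [show (3 : ZMod 4).val = 3 from rfl, pow_succ, Complex.I_sq]; ring

lemma ipow_sum' {α : Type*} (s : Finset α) (f : α → ZMod 4) :
    ipow (∑ x ∈ s, f x) = ∏ x ∈ s, ipow (f x) := by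
  induction s using Finset.cons_induction with
  | empty => simp [ipow]
  | cons a s ha ih => rw [Finset.sum_cons, Finset.prod_cons, ipow_add', ih]

lemma dot4_add' {n : ℕ} (u v w : Fin n → ZMod 4) :
    dot4 u (v + w) = dot4 u v + dot4 u w := by
  unfold dot4; rw [← Finset.sum_add_distrib]
  exact Finset.sum_congr rfl fun i _ => by simp [mul_add]

lemma dot4_neg' {n : ℕ} (u w : Fin n → ZMod 4) : dot4 u (-w) = -dot4 u w := by
  unfold dot4; rw [← Finset.sum_neg_distrib]
  exact Finset.sum_congr rfl fun i _ => by simp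

lemma char_factor' (c : ZMod 4) (h : c = 1 ∨ c = 3) : ∑ a : ZMod 4, ipow (a * c) = 0 := by
  have h2 : Complex.I ^ 2 = -1 := Complex.I_sq
  have h3 : Complex.I ^ 3 = -Complex.I := by rw [pow_succ, h2]; ring
  rcases h with h | h <;> subst h <;>
    rw [show (Finset.univ : Finset (ZMod 4)) = {0, 1, 2, 3} by decide] <;>
    rw [show ({0,1,2,3} : Finset (ZMod 4)) = insert 0 (insert 1 (insert 2 ({3} : Finset (ZMod 4)))) from rfl] <;>
    rw [Finset.sum_insert (by decide), Finset.sum_insert (by decide),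
      Finset.sum_insert (by decide), Finset.sum_singleton] <;>
    unfold ipow
  · rw [show ((0:ZMod 4)*1).val = 0 from rfl, show ((1:ZMod 4)*1).val = 1 from rfl,
      show ((2:ZMod 4)*1).val = 2 from rfl, show ((3:ZMod 4)*1).val = 3 from rfl, h2, h3]
    ring
  · rw [show ((0:ZMod 4)*3).val = 0 from rfl, show ((1:ZMod 4)*3).val = 3 from rfl,
      show ((2:ZMod 4)*3).val = 2 from rfl, show ((3:ZMod 4)*3).val = 1 from rfl, h2, h3]
    ring

lemma char_sum' {n : ℕ} (w : Fin n → ZMod 4) (i0 : Fin n) (h : w i0 = 1 ∨ w i0 = 3) :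
    ∑ u : Fin n → ZMod 4, ipow (dot4 u w) = 0 := by
  have key : ∑ u : Fin n → ZMod 4, ipow (dot4 u w)
      = ∏ i : Fin n, ∑ a : ZMod 4, ipow (a * w i) := by
    rw [Finset.prod_univ_sum, ← Fintype.piFinset_univ]
    exact Finset.sum_congr rfl fun u _ => by rw [dot4, ipow_sum']
  rw [key]
  exact Finset.prod_eq_zero (Finset.mem_univ i0) (char_factor' _ h)


lemma z1 : ∀ a : ZMod 4, a + 1 = 0 ∨ a + 1 = 2 → a = 1 ∨ a = 3 := by decide
lemma z2 : ∀ a b : ZMod 4, (a = 0 ∨ a = 2) → (a * b = 0 ∨ a * b = 2) := by decide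
lemma z3 : ∀ a x y : ZMod 4, (a = 0 ∨ a = 2) → (x + y = 0 ∨ x + y = 2) →
    a * x = a * y := by decide
lemma z4 : ∀ a : ZMod 4, (a = 1 ∨ a = 3) → (-a = 1 ∨ -a = 3) := by decide
lemma z5 : ∀ a b c : ZMod 4, (a = 1 ∨ a = 3) → (b = 1 ∨ b = 3) → (c = 1 ∨ c = 3) →
    (a + b + c = 1 ∨ a + b + c = 3) := by decide
lemma z6 : ∀ x y : ZMod 4, (x = 0 ∨ x = 2) → (y = 0 ∨ y = 2) →
    (x + y = 0 ∨ x + y = 2) := by decide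

noncomputable def coefE {n : ℕ} (gstar : Fin n → ZMod 4)
    (p : (Fin n → ZMod 4) × Bool) : ℂ :=
  if p.1 = gstar then
    (cond p.2 (1/(1-Complex.I)) (-Complex.I/(1-Complex.I))) else 1

def vecE {n : ℕ} (p : (Fin n → ZMod 4) × Bool) : Fin n → ZMod 4 :=
  cond p.2 p.1 (-p.1)

/-- For an even S̄ ⊆ Ω with distinguished element g*:
Σ_{u ∈ Δ₀} σ̄_{odd,u}² = 2^n(2(v-s)-1)², Σ_u σ̄_{odd,u}³ = 0, and hence
F_{odd,3} = 3·2^{2n}(2(v-s)-1)². -/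
theorem even_set_sums_odd {n : ℕ} (Sb : Finset (Fin n → ZMod 4))
    (hΩ : ∀ g ∈ Sb, inOmega g)
    (heven : ∀ g ∈ Sb, ∀ g' ∈ Sb, allEven (g + g'))
    (gstar : Fin n → ZMod 4) (hg : gstar ∈ Sb) (hcard : 1 ≤ Sb.card) :
    (∑ u ∈ Finset.univ.filter (allEven (n := n)), (sigOdd Sb gstar u) ^ 2
        = 2 ^ n * (2 * (Sb.card : ℂ) - 1) ^ 2) ∧
    (∑ u : Fin n → ZMod 4, (sigOdd Sb gstar u) ^ 3 = 0) ∧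
    (3 * 2 ^ n *
        (∑ u ∈ Finset.univ.filter (allEven (n := n)), (sigOdd Sb gstar u) ^ 2) +
      (∑ u : Fin n → ZMod 4, (sigOdd Sb gstar u) ^ 3)
        = 3 * 2 ^ (2 * n) * (2 * (Sb.card : ℂ) - 1) ^ 2) := by

  obtain ⟨i0, hi0, -⟩ := hΩ gstar hg
  have hoddS : ∀ g ∈ Sb, g i0 = 1 ∨ g i0 = 3 := by
    intro g hgm
    have h := heven g hgm gstar hg i0
    rw [Pi.add_apply, hi0] at h
    exact z1 _ h
  have hI : (1 : ℂ) - Complex.I ≠ 0 := by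
    intro h
    have := congrArg Complex.im h
    simp at this
  have hcast : ((Sb.card - 1 : ℕ) : ℂ) = (Sb.card : ℂ) - 1 := by
    rw [Nat.cast_sub hcard, Nat.cast_one]
  -- Part 1
  have part1 : ∑ u ∈ Finset.univ.filter (allEven (n := n)), (sigOdd Sb gstar u) ^ 2
      = 2 ^ n * (2 * (Sb.card : ℂ) - 1) ^ 2 := by
    have hsq : ∀ u ∈ Finset.univ.filter (allEven (n := n)),
        (sigOdd Sb gstar u) ^ 2 = (2 * (Sb.card : ℂ) - 1) ^ 2 := by
      intro u hu
      have hu' : allEven u := (Finset.mem_filter.mp hu).2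
      have hdstar : dot4 u gstar = 0 ∨ dot4 u gstar = 2 := by
        unfold dot4
        exact Finset.sum_induction _ (fun x => x = 0 ∨ x = 2)
          (fun x y hx hy => z6 x y hx hy) (Or.inl rfl)
          (fun i _ => z2 _ _ (hu' i))
      have hdg : ∀ g ∈ Sb, dot4 u g = dot4 u gstar := by
        intro g hgm
        unfold dot4
        refine Finset.sum_congr rfl fun i _ => ?_
        have h2 := heven g hgm gstar hg i
        rw [Pi.add_apply] at h2
        exact z3 _ _ _ (hu' i) h2
      have hsig : sigOdd Sb gstar u = ipow (dot4 u gstar) * (2 * (Sb.card : ℂ) - 1) := by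
        unfold sigOdd
        have herase : ∀ g ∈ Sb.erase gstar,
            ipow (dot4 u g) + ipow (-(dot4 u g)) = 2 * ipow (dot4 u gstar) := by
          intro g hgm
          rw [hdg g (Finset.mem_of_mem_erase hgm)]
          rcases hdstar with h | h <;> rw [h]
          · rw [neg_zero, ipow_zero']; ring
          · rw [show -(2 : ZMod 4) = 2 from rfl, ipow_two']; ring
        rw [Finset.sum_congr rfl herase, Finset.sum_const,
          Finset.card_erase_of_mem hg, nsmul_eq_mul, hcast]
        rcases hdstar with h | h <;> rw [h]
        · rw [show (3 : ZMod 4) - 0 = 3 from rfl, ipow_zero', ipow_three']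
          rw [show (1 : ℂ) + -Complex.I = 1 - Complex.I by ring, div_self hI]
          ring
        · rw [show (3 : ZMod 4) - 2 = 1 from rfl, ipow_two', ipow_one']
          rw [show (-1 : ℂ) + Complex.I = -(1 - Complex.I) by ring, neg_div,
            div_self hI]
          ring
      have hone : (ipow (dot4 u gstar)) ^ 2 = 1 := by
        rcases hdstar with h | h <;> rw [h]
        · rw [ipow_zero']; ring
        · rw [ipow_two']; ring
      rw [hsig, mul_pow, hone, one_mul]
    rw [Finset.sum_congr rfl hsq, Finset.sum_const, nsmul_eq_mul]
    have hcardf : (Finset.univ.filter (allEven (n := n))).card = 2 ^ n := by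
      have he : Finset.univ.filter (allEven (n := n))
          = Fintype.piFinset (fun _ : Fin n => ({0, 2} : Finset (ZMod 4))) := by
        ext u
        simp [allEven, Fintype.mem_piFinset]
      rw [he, Fintype.card_piFinset]
      simp [show ({0, 2} : Finset (ZMod 4)).card = 2 from rfl]
    rw [hcardf]
    push_cast
    ring
  -- Part 2
  have part2 : ∑ u : Fin n → ZMod 4, (sigOdd Sb gstar u) ^ 3 = 0 := by
    have hVodd : ∀ p ∈ Sb ×ˢ (Finset.univ : Finset Bool),
        vecE p i0 = 1 ∨ vecE p i0 = 3 := by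
      intro p hp
      have hmem : p.1 ∈ Sb := (Finset.mem_product.mp hp).1
      have hop := hoddS p.1 hmem
      unfold vecE
      cases p.2 with
      | true => exact hop
      | false => rw [Bool.cond_false, Pi.neg_apply]; exact z4 _ hop
    have hrep : ∀ u, sigOdd Sb gstar u
        = ∑ p ∈ Sb ×ˢ (Finset.univ : Finset Bool),
            coefE gstar p * ipow (dot4 u (vecE p)) := by
      intro u
      rw [Finset.sum_product]
      rw [← Finset.add_sum_erase _ _ hg]
      unfold sigOdd
      congr 1
      · rw [Fintype.sum_bool]
        unfold coefE vecE
        simp only [if_pos rfl, if_true, Bool.cond_true, Bool.cond_false, dot4_neg']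
        rw [show (3 : ZMod 4) - dot4 u gstar = 3 + -(dot4 u gstar) by ring,
          ipow_add', ipow_three']
        field_simp
      · refine Finset.sum_congr rfl fun g hgm => ?_
        have hne : g ≠ gstar := Finset.ne_of_mem_erase hgm
        rw [Fintype.sum_bool]
        unfold coefE vecE
        simp only [if_neg hne, Bool.cond_true, Bool.cond_false, dot4_neg', one_mul]
    have cube : ∀ u, (sigOdd Sb gstar u) ^ 3
        = ∑ q ∈ (Sb ×ˢ (Finset.univ : Finset Bool)) ×ˢ
              ((Sb ×ˢ (Finset.univ : Finset Bool)) ×ˢ (Sb ×ˢ (Finset.univ : Finset Bool))),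
            (coefE gstar q.1 * coefE gstar q.2.1 * coefE gstar q.2.2)
              * ipow (dot4 u (vecE q.1 + vecE q.2.1 + vecE q.2.2)) := by
      intro u
      rw [hrep u]
      conv_rhs => rw [Finset.sum_product]
      rw [pow_succ, pow_two, Finset.sum_mul_sum, Finset.sum_mul]
      refine Finset.sum_congr rfl fun p1 _ => ?_
      conv_rhs => rw [Finset.sum_product]
      rw [Finset.sum_mul]
      refine Finset.sum_congr rfl fun p2 _ => ?_
      rw [Finset.mul_sum]
      refine Finset.sum_congr rfl fun p3 _ => ?_
      rw [dot4_add', dot4_add', ipow_add', ipow_add']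
      ring
    rw [Finset.sum_congr rfl (fun u _ => cube u), Finset.sum_comm]
    refine Finset.sum_eq_zero fun q hq => ?_
    have h1 := (Finset.mem_product.mp hq).1
    have h2 := (Finset.mem_product.mp hq).2
    have h21 := (Finset.mem_product.mp h2).1
    have h22 := (Finset.mem_product.mp h2).2
    have hW : (vecE q.1 + vecE q.2.1 + vecE q.2.2) i0 = 1
        ∨ (vecE q.1 + vecE q.2.1 + vecE q.2.2) i0 = 3 := by
      rw [Pi.add_apply, Pi.add_apply]
      exact z5 _ _ _ (hVodd q.1 h1) (hVodd q.2.1 h21) (hVodd q.2.2 h22)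
    rw [← Finset.mul_sum, char_sum' _ i0 hW, mul_zero]
  refine ⟨part1, part2, ?_⟩
  rw [part1, part2, add_zero, show 2 * n = n + n from two_mul n, pow_add]
  ring
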